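/- There exist constants C > 0 and d₀ > 0 such that for every d ≥ d₀, the differential entropy H(ρ_d) = −∫_ℝ ρ_d(x) log ρ_d(x) dx satisfies |H(ρ_d) − π²/(3d)| ≤ C/d². -/

import Mathlib

open MeasureTheory Filter Set Topology

noncomputable section

/-- The logistic-profile density `ρ_d`. -/
def rho (d : ℝ) (x : ℝ) : ℝ :=
  (1 - Real.exp (-d)) / ((1 + Real.exp (-d * x)) * (1 + Real.exp (d * (x - 1))))

namespace EntropyAux

/-- The logistic sigmoid. -/
def sg (t : ℝ) : ℝ := (1 + Real.exp (-t))⁻¹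

/-- `log (1 + exp (-t))`. -/
def fl (t : ℝ) : ℝ := Real.log (1 + Real.exp (-t))

/-- The profile at scale 1. -/
def phi (d t : ℝ) : ℝ := sg t - sg (t - d)

lemma one_add_exp_pos (t : ℝ) : 0 < 1 + Real.exp t := by positivity

lemma one_add_exp_ne (t : ℝ) : 1 + Real.exp t ≠ 0 := (one_add_exp_pos t).ne'

lemma sg_pos (t : ℝ) : 0 < sg t := by
  have := one_add_exp_pos (-t); unfold sg; positivity

lemma sg_mul (t : ℝ) : sg t * (1 + Real.exp (-t)) = 1 :=
  inv_mul_cancel₀ (one_add_exp_ne (-t))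

lemma sg_lt_one (t : ℝ) : sg t < 1 := by
  nlinarith [sg_mul t, Real.exp_pos (-t), sg_pos t]

lemma sg_le_sg {a b : ℝ} (h : a ≤ b) : sg a ≤ sg b := by
  have hab : Real.exp (-b) ≤ Real.exp (-a) := Real.exp_le_exp.mpr (by linarith)
  nlinarith [sg_mul a, sg_mul b, sg_pos a, sg_pos b, one_add_exp_pos (-a),
    one_add_exp_pos (-b), mul_nonneg (sg_pos a).le (sub_nonneg.mpr hab)]

lemma sg_le_exp (t : ℝ) : sg t ≤ Real.exp t := by
  have h : Real.exp t * Real.exp (-t) = 1 := by rw [← Real.exp_add]; simp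
  nlinarith [sg_mul t, sg_pos t, Real.exp_pos t, Real.exp_pos (-t), one_add_exp_pos (-t)]

lemma sg_le_one (t : ℝ) : sg t ≤ 1 := (sg_lt_one t).le

lemma sg_le_exp_half (t : ℝ) : sg t ≤ Real.exp (t / 2) := by
  rcases le_or_gt t 0 with h | h
  · exact (sg_le_exp t).trans (Real.exp_le_exp.mpr (by linarith))
  · exact (sg_le_one t).trans (Real.one_le_exp (by linarith))

lemma sg_neg (t : ℝ) : sg (-t) = 1 - sg t := by
  unfold sg
  rw [neg_neg]
  have h1 := one_add_exp_ne t
  have h2 := one_add_exp_ne (-t)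
  have h3 : Real.exp t * Real.exp (-t) = 1 := by rw [← Real.exp_add]; simp
  field_simp
  nlinarith [h3]

lemma phi_prod (d t : ℝ) : phi d t = (1 - Real.exp (-d)) * (sg t * sg (d - t)) := by
  unfold phi sg
  simp only [neg_sub, Real.exp_sub, Real.exp_neg]
  have hX : Real.exp t ≠ 0 := (Real.exp_pos t).ne'
  have hY : Real.exp d ≠ 0 := (Real.exp_pos d).ne'
  have h1 : 1 + (Real.exp t)⁻¹ ≠ 0 := by positivity
  have h2 : 1 + Real.exp d / Real.exp t ≠ 0 := by positivity
  have h3 : 1 + Real.exp t / Real.exp d ≠ 0 := by positivity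
  have h4 : 1 + (Real.exp d)⁻¹ ≠ 0 := by positivity
  field_simp
  ring

lemma rho_eq (d x : ℝ) : rho d x = phi d (d * x) := by
  rw [phi_prod]
  unfold rho sg
  rw [show d * (x - 1) = -(d - d * x) by ring, show -d * x = -(d * x) by ring,
    div_eq_mul_inv, mul_inv]

lemma exp_neg_lt_one {d : ℝ} (hd : 0 < d) : Real.exp (-d) < 1 :=
  Real.exp_lt_one_iff.mpr (by linarith)

lemma phi_pos {d : ℝ} (hd : 0 < d) (t : ℝ) : 0 < phi d t := by
  rw [phi_prod]
  have h := exp_neg_lt_one hd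
  exact mul_pos (by linarith) (mul_pos (sg_pos t) (sg_pos (d - t)))

lemma phi_nonneg {d : ℝ} (hd : 0 ≤ d) (t : ℝ) : 0 ≤ phi d t :=
  sub_nonneg.mpr (sg_le_sg (by linarith))

lemma phi_le_sg (d t : ℝ) : phi d t ≤ sg t := by
  unfold phi; linarith [sg_pos (t - d)]

lemma phi_le_sg' (d t : ℝ) : phi d t ≤ sg (d - t) := by
  have h := sg_neg (t - d)
  rw [neg_sub] at h
  unfold phi
  linarith [sg_lt_one t]

lemma phi_symm (d t : ℝ) : phi d (d - t) = phi d t := by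
  rw [phi_prod, phi_prod, show d - (d - t) = t by ring]
  ring

lemma fl_pos (t : ℝ) : 0 < fl t :=
  Real.log_pos (by linarith [Real.exp_pos (-t)])

lemma fl_nonneg (t : ℝ) : 0 ≤ fl t := (fl_pos t).le

lemma fl_le_exp (t : ℝ) : fl t ≤ Real.exp (-t) := by
  have h := Real.log_le_sub_one_of_pos (one_add_exp_pos (-t))
  unfold fl; linarith

lemma log_sg (t : ℝ) : Real.log (sg t) = -fl t := by
  unfold sg fl; rw [Real.log_inv]

lemma exp_neg_fl (t : ℝ) : Real.exp (-fl t) = sg t := by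
  rw [← log_sg, Real.exp_log (sg_pos t)]

lemma log_phi {d : ℝ} (hd : 0 < d) (t : ℝ) :
    Real.log (phi d t) = Real.log (1 - Real.exp (-d)) - fl t - fl (d - t) := by
  rw [phi_prod]
  have h := exp_neg_lt_one hd
  rw [Real.log_mul (by linarith) (mul_pos (sg_pos t) (sg_pos (d - t))).ne',
    Real.log_mul (sg_pos t).ne' (sg_pos (d - t)).ne', log_sg, log_sg]
  ring

/-! ### Pointwise bounds -/

lemma fl_bound (t : ℝ) : fl t ≤ 4 * Real.exp (-(t / 4)) := by
  rcases le_or_gt 0 t with h | h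
  · have h1 : Real.exp (-t) ≤ Real.exp (-(t / 4)) := Real.exp_le_exp.mpr (by linarith)
    have := fl_le_exp t
    nlinarith [Real.exp_pos (-(t / 4))]
  · -- t < 0 : fl t ≤ log 2 - t ≤ 4 exp(-t/4)
    have hexp : (1 : ℝ) ≤ Real.exp (-t) := Real.one_le_exp (by linarith)
    have h1 : 1 + Real.exp (-t) ≤ 2 * Real.exp (-t) := by linarith
    have h2 : fl t ≤ Real.log (2 * Real.exp (-t)) := by
      unfold fl
      rw [← Real.log_le_log_iff (one_add_exp_pos (-t)) (by positivity)] at h1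
      · exact h1
    have h3 : Real.log (2 * Real.exp (-t)) = Real.log 2 - t := by
      rw [Real.log_mul two_ne_zero (Real.exp_pos (-t)).ne', Real.log_exp]
      ring
    have hlog2 : Real.log 2 ≤ 1 := by
      have := Real.log_le_sub_one_of_pos (by norm_num : (0:ℝ) < 2); linarith
    have h4 : 1 + (-t) / 4 ≤ Real.exp (-t / 4) := by
      have := Real.add_one_le_exp (-t / 4); linarith
    have h5 : Real.exp (-(t/4)) = Real.exp (-t / 4) := by ring_nf
    rw [h5]
    nlinarith

lemma sg_fl_bound (t : ℝ) : sg t * fl t ≤ 4 * Real.exp (-(|t| / 4)) := by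
  rcases le_or_gt 0 t with h | h
  · rw [abs_of_nonneg h]
    have h1 : sg t * fl t ≤ fl t := by
      nlinarith [sg_le_one t, sg_pos t, fl_nonneg t]
    exact h1.trans (fl_bound t)
  · rw [abs_of_neg h]
    have h1 : sg t * fl t ≤ Real.exp (t / 2) * fl t :=
      mul_le_mul_of_nonneg_right (sg_le_exp_half t) (fl_nonneg t)
    have h2 : Real.exp (t / 2) * fl t ≤ Real.exp (t / 2) * (4 * Real.exp (-(t / 4))) :=
      mul_le_mul_of_nonneg_left (fl_bound t) (Real.exp_pos _).le
    have h3 : Real.exp (t / 2) * (4 * Real.exp (-(t / 4))) = 4 * Real.exp (t / 4) := by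
      rw [show Real.exp (t / 2) * (4 * Real.exp (-(t / 4)))
        = 4 * (Real.exp (t / 2) * Real.exp (-(t / 4))) by ring, ← Real.exp_add]
      congr 1
      ring
    have h4 : Real.exp (t / 4) ≤ Real.exp (-(-t / 4)) := by
      apply Real.exp_le_exp.mpr; linarith
    nlinarith [Real.exp_pos (-(-t/4)), Real.exp_pos (t/4)]

lemma exp_fl_bound (t : ℝ) : Real.exp (t / 2) * fl t ≤ 4 * Real.exp (-(|t| / 4)) := by
  rcases le_or_gt 0 t with h | h
  · rw [abs_of_nonneg h]
    have h1 : Real.exp (t / 2) * fl t ≤ Real.exp (t / 2) * Real.exp (-t) :=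
      mul_le_mul_of_nonneg_left (fl_le_exp t) (Real.exp_pos _).le
    have h2 : Real.exp (t / 2) * Real.exp (-t) = Real.exp (-(t / 2)) := by
      rw [← Real.exp_add]; ring_nf
    have h3 : Real.exp (-(t / 2)) ≤ Real.exp (-(t / 4)) := Real.exp_le_exp.mpr (by linarith)
    nlinarith [Real.exp_pos (-(t/4))]
  · rw [abs_of_neg h]
    have h2 : Real.exp (t / 2) * fl t ≤ Real.exp (t / 2) * (4 * Real.exp (-(t / 4))) :=
      mul_le_mul_of_nonneg_left (fl_bound t) (Real.exp_pos _).le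
    have h3 : Real.exp (t / 2) * (4 * Real.exp (-(t / 4))) = 4 * Real.exp (t / 4) := by
      rw [show Real.exp (t / 2) * (4 * Real.exp (-(t / 4)))
        = 4 * (Real.exp (t / 2) * Real.exp (-(t / 4))) by ring, ← Real.exp_add]
      congr 1
      ring
    have h4 : Real.exp (t / 4) ≤ Real.exp (-(-t / 4)) := by
      apply Real.exp_le_exp.mpr; linarith
    nlinarith [Real.exp_pos (-(-t/4)), Real.exp_pos (t/4)]

/-! ### Continuity -/

@[fun_prop]
lemma continuous_sg : Continuous sg := by
  apply Continuous.inv₀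
  · fun_prop
  · intro t; exact one_add_exp_ne (-t)

@[fun_prop]
lemma continuous_fl : Continuous fl := by
  apply Continuous.log
  · fun_prop
  · intro t; exact one_add_exp_ne (-t)

@[fun_prop]
lemma continuous_phi (d : ℝ) : Continuous (phi d) := by
  unfold phi; fun_prop

/-! ### Integrability -/

lemma int_exp_abs (b : ℝ) : Integrable (fun t : ℝ => Real.exp (-(|t - b| / 4))) := by
  have hIoi : IntegrableOn (fun t : ℝ => Real.exp (-(|t - b| / 4))) (Ioi b) := by
    have h0 : IntegrableOn (fun t : ℝ => Real.exp (b / 4) * Real.exp (-(1/4 : ℝ) * t))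
        (Ioi b) := (exp_neg_integrableOn_Ioi b (by norm_num)).const_mul _
    apply h0.congr_fun ?_ measurableSet_Ioi
    intro x hx
    show Real.exp (b / 4) * Real.exp (-(1/4 : ℝ) * x) = Real.exp (-(|x - b| / 4))
    rw [← Real.exp_add, abs_of_pos (sub_pos.mpr hx)]
    congr 1
    ring
  have hIic : IntegrableOn (fun t : ℝ => Real.exp (-(|t - b| / 4))) (Iic b) := by
    rw [← (Measure.measurePreserving_neg (volume : Measure ℝ)).integrableOn_comp_preimage
        (Homeomorph.neg ℝ).measurableEmbedding]
    simp only [Function.comp_def, neg_preimage, neg_Iic]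
    have h0 : IntegrableOn (fun t : ℝ => Real.exp (-b / 4) * Real.exp (-(1/4 : ℝ) * t))
        (Ici (-b)) := by
      rw [integrableOn_Ici_iff_integrableOn_Ioi]
      exact (exp_neg_integrableOn_Ioi (-b) (by norm_num)).const_mul _
    apply h0.congr_fun ?_ measurableSet_Ici
    intro x hx
    rw [mem_Ici] at hx
    show Real.exp (-b / 4) * Real.exp (-(1/4 : ℝ) * x) = Real.exp (-(|-x - b| / 4))
    have habs : |-x - b| = x + b := by
      rw [show -x - b = -(x + b) by ring, abs_neg, abs_of_nonneg (by linarith)]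
    rw [← Real.exp_add, habs]
    congr 1
    ring
  rw [← integrableOn_univ, ← Iic_union_Ioi (a := b)]
  exact hIic.union hIoi

lemma integrable_of_bound (g : ℝ → ℝ) (hg : Continuous g) (C b : ℝ)
    (hb : ∀ t, |g t| ≤ C * Real.exp (-(|t - b| / 4))) : Integrable g := by
  apply Integrable.mono' ((int_exp_abs b).const_mul C) hg.aestronglyMeasurable
  exact ae_of_all _ (fun t => by simpa [Real.norm_eq_abs] using hb t)

lemma intg_sg_fl : Integrable (fun t : ℝ => sg t * fl t) := by
  apply integrable_of_bound _ (by fun_prop) 4 0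
  intro t
  rw [abs_of_nonneg (mul_nonneg (sg_pos t).le (fl_nonneg t)), sub_zero]
  exact sg_fl_bound t

lemma intg_exp_fl : Integrable (fun t : ℝ => Real.exp (t / 2) * fl t) := by
  apply integrable_of_bound _ (by fun_prop) 4 0
  intro t
  rw [abs_of_nonneg (mul_nonneg (Real.exp_pos _).le (fl_nonneg t)), sub_zero]
  exact exp_fl_bound t

lemma intg_sg_shift_fl {d : ℝ} (hd : 0 ≤ d) :
    Integrable (fun t : ℝ => sg (t - d) * fl t) := by
  apply integrable_of_bound _ (by fun_prop) 4 0
  intro t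
  rw [abs_of_nonneg (mul_nonneg (sg_pos _).le (fl_nonneg t)), sub_zero]
  calc sg (t - d) * fl t ≤ sg t * fl t :=
        mul_le_mul_of_nonneg_right (sg_le_sg (by linarith)) (fl_nonneg t)
    _ ≤ 4 * Real.exp (-(|t| / 4)) := sg_fl_bound t

lemma phi_bound {d : ℝ} (hd : 0 ≤ d) (t : ℝ) :
    phi d t ≤ 4 * Real.exp (d / 4) * Real.exp (-(|t - d / 2| / 4)) := by
  rcases le_or_gt t (d / 2) with h | h
  · have h1 : phi d t ≤ Real.exp (t / 2) := (phi_le_sg d t).trans (sg_le_exp_half t)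
    have h2 : Real.exp (t / 2) ≤ Real.exp (d / 4) * Real.exp ((t - d / 2) / 4) := by
      rw [← Real.exp_add]
      apply Real.exp_le_exp.mpr
      nlinarith
    have h3 : Real.exp ((t - d / 2) / 4) = Real.exp (-(|t - d / 2| / 4)) := by
      rw [abs_of_nonpos (by linarith)]; ring_nf
    rw [h3] at h2
    nlinarith [Real.exp_pos (d / 4), Real.exp_pos (-(|t - d / 2| / 4))]
  · have h1 : phi d t ≤ Real.exp ((d - t) / 2) := (phi_le_sg' d t).trans (sg_le_exp_half _)
    have h2 : Real.exp ((d - t) / 2) ≤ Real.exp (d / 4) * Real.exp (-((t - d / 2) / 4)) := by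
      rw [← Real.exp_add]
      apply Real.exp_le_exp.mpr
      nlinarith
    have h3 : Real.exp (-((t - d / 2) / 4)) = Real.exp (-(|t - d / 2| / 4)) := by
      rw [abs_of_pos (by linarith)]
    rw [h3] at h2
    nlinarith [Real.exp_pos (d / 4), Real.exp_pos (-(|t - d / 2| / 4))]

lemma intg_phi {d : ℝ} (hd : 0 ≤ d) : Integrable (phi d) := by
  apply integrable_of_bound _ (by fun_prop) (4 * Real.exp (d / 4)) (d / 2)
  intro t
  rw [abs_of_nonneg (phi_nonneg hd t)]
  exact phi_bound hd t

lemma intg_phi_fl {d : ℝ} (hd : 0 ≤ d) : Integrable (fun t : ℝ => phi d t * fl t) := by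
  apply integrable_of_bound _ (by fun_prop) 4 0
  intro t
  rw [abs_of_nonneg (mul_nonneg (phi_nonneg hd t) (fl_nonneg t)), sub_zero]
  calc phi d t * fl t ≤ sg t * fl t :=
        mul_le_mul_of_nonneg_right (phi_le_sg d t) (fl_nonneg t)
    _ ≤ 4 * Real.exp (-(|t| / 4)) := sg_fl_bound t

lemma intg_phi_fl' {d : ℝ} (hd : 0 ≤ d) :
    Integrable (fun t : ℝ => phi d t * fl (d - t)) := by
  apply integrable_of_bound _ (by fun_prop) 4 d
  intro t
  rw [abs_of_nonneg (mul_nonneg (phi_nonneg hd t) (fl_nonneg _))]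
  have h1 : phi d t * fl (d - t) ≤ sg (d - t) * fl (d - t) :=
    mul_le_mul_of_nonneg_right (phi_le_sg' d t) (fl_nonneg _)
  have h2 := sg_fl_bound (d - t)
  rw [show |d - t| = |t - d| by rw [abs_sub_comm]] at h2
  linarith

/-! ### The total mass of `phi` -/

lemma hasDerivAt_Sg (t : ℝ) : HasDerivAt (fun t => Real.log (1 + Real.exp t)) (sg t) t := by
  have h : HasDerivAt (fun t : ℝ => 1 + Real.exp t) (Real.exp t) t :=
    (Real.hasDerivAt_exp t).const_add 1
  have h2 := h.log (one_add_exp_ne t)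
  convert h2 using 1
  unfold sg
  rw [Real.exp_neg]
  have h3 := Real.exp_pos t
  field_simp
  ring

lemma Sg_eq (t : ℝ) : Real.log (1 + Real.exp t) = t + fl t := by
  have h : 1 + Real.exp t = Real.exp t * (1 + Real.exp (-t)) := by
    rw [mul_add, mul_one, ← Real.exp_add]; simp; ring
  rw [h, Real.log_mul (Real.exp_pos t).ne' (one_add_exp_ne (-t)), Real.log_exp]
  rfl

lemma fl_neg (t : ℝ) : fl (-t) = t + fl t := by
  unfold fl
  rw [neg_neg]
  exact Sg_eq t

lemma fl_tendsto : Tendsto fl atTop (𝓝 0) := by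
  have h1 : Tendsto (fun t : ℝ => 1 + Real.exp (-t)) atTop (𝓝 1) := by
    have := Real.tendsto_exp_neg_atTop_nhds_zero
    have h2 := tendsto_const_nhds (x := (1:ℝ)) (f := atTop).add this
    simpa using h2
  have h3 : Tendsto Real.log (𝓝 1) (𝓝 0) := by
    have := (Real.continuousAt_log (by norm_num : (1:ℝ) ≠ 0)).tendsto
    simpa using this
  exact h3.comp h1

lemma integral_phi {d : ℝ} (hd : 0 < d) : (∫ t : ℝ, phi d t) = d := by
  set F : ℝ → ℝ := fun t => Real.log (1 + Real.exp t) - Real.log (1 + Real.exp (t - d)) with hF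
  have hderiv : ∀ t : ℝ, HasDerivAt F (phi d t) t := by
    intro t
    have h1 := hasDerivAt_Sg t
    have h2 : HasDerivAt (fun t : ℝ => Real.log (1 + Real.exp (t - d))) (sg (t - d)) t := by
      have h3 := (hasDerivAt_Sg (t - d)).comp t ((hasDerivAt_id t).sub_const d)
      simpa [Function.comp_def] using h3
    exact h1.sub h2
  have hint := intg_phi hd.le
  have key : ∀ R : ℝ, (∫ t in (-R)..R, phi d t) = F R - F (-R) := fun R =>
    intervalIntegral.integral_eq_sub_of_hasDerivAt (fun t _ => hderiv t)
      hint.intervalIntegrable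
  have h1 : Tendsto (fun R : ℝ => ∫ t in (-R)..R, phi d t) atTop (𝓝 (∫ t : ℝ, phi d t)) :=
    intervalIntegral_tendsto_integral hint tendsto_neg_atTop_atBot tendsto_id
  have hFval : ∀ R : ℝ, F R - F (-R) = d + fl (R + d) - fl (R - d) := by
    intro R
    have e1 : F R = d + fl R - fl (R - d) := by
      rw [hF]
      simp only
      rw [Sg_eq, Sg_eq]
      ring
    have e2 : F (-R) = d + fl (-R) - fl (-R - d) := by
      rw [hF]
      simp only
      rw [Sg_eq, Sg_eq]
      ring
    rw [e1, e2, show (-R : ℝ) - d = -(R + d) by ring, fl_neg, fl_neg]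
    ring
  have h2 : Tendsto (fun R : ℝ => ∫ t in (-R)..R, phi d t) atTop (𝓝 d) := by
    have h3 : Tendsto (fun R : ℝ => d + fl (R + d) - fl (R - d)) atTop (𝓝 (d + 0 - 0)) := by
      apply Tendsto.sub
      · exact tendsto_const_nhds.add
          (fl_tendsto.comp (tendsto_atTop_add_const_right atTop d tendsto_id))
      · have hsub : Tendsto (fun R : ℝ => R - d) atTop atTop := by
          have := tendsto_atTop_add_const_right atTop (-d) (tendsto_id (α := ℝ))
          apply this.congr
          intro x
          simp [sub_eq_add_neg]
        exact fl_tendsto.comp hsub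
    rw [show d + 0 - 0 = d by ring] at h3
    apply h3.congr
    intro R
    rw [key R, hFval R]
  exact tendsto_nhds_unique h1 h2

/-! ### Symmetry -/

lemma integral_phi_fl_symm (d : ℝ) :
    (∫ t : ℝ, phi d t * fl (d - t)) = ∫ t : ℝ, phi d t * fl t := by
  have h2 : (fun t : ℝ => phi d t * fl (d - t)) =
      fun t : ℝ => phi d (d - t) * fl (d - t) := by
    funext t; rw [phi_symm]
  rw [h2]
  exact integral_sub_left_eq_self (fun t : ℝ => phi d t * fl t) volume d

/-! ### The key integral: `∫ sg * fl = π² / 6` -/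

lemma basel' : HasSum (fun n : ℕ => 1 / ((n : ℝ) + 1) ^ 2) (Real.pi ^ 2 / 6) := by
  have h := hasSum_zeta_two
  have h2 := (hasSum_nat_add_iff' (f := fun n : ℕ => (1 : ℝ) / (n : ℝ) ^ 2) 1).mpr h
  simp only [Finset.range_one, Finset.sum_singleton, Nat.cast_zero] at h2
  norm_num at h2
  simp only [one_div]
  exact h2

lemma term_hasDeriv (b : ℝ) (hb : 0 < b) (s : ℝ) :
    HasDerivAt (fun s : ℝ => -((s * b + 1) / b ^ 2) * Real.exp (-b * s))
      (s * Real.exp (-b * s)) s := by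
  have h1 : HasDerivAt (fun s : ℝ => -((s * b + 1) / b ^ 2)) (-(b / b ^ 2)) s := by
    exact (((hasDerivAt_mul_const b).add_const 1).div_const (b ^ 2)).neg
  have h2 : HasDerivAt (fun s : ℝ => Real.exp (-b * s)) (-b * Real.exp (-b * s)) s := by
    have h3 : HasDerivAt (fun x : ℝ => -b * x) (-b) s := by
      simpa using (hasDerivAt_id s).const_mul (-b)
    have h4 := h3.exp
    convert h4 using 1
    ring
  have h4 := h1.mul h2
  refine h4.congr_deriv ?_
  have hb' : b ≠ 0 := hb.ne'
  field_simp
  ring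

lemma term_tendsto (b : ℝ) (hb : 0 < b) :
    Tendsto (fun s : ℝ => -((s * b + 1) / b ^ 2) * Real.exp (-b * s)) atTop (𝓝 0) := by
  have hbs : Tendsto (fun s : ℝ => b * s) atTop atTop :=
    Tendsto.const_mul_atTop hb tendsto_id
  have h1 : Tendsto (fun s : ℝ => (b * s) ^ 1 * Real.exp (-(b * s))) atTop (𝓝 0) :=
    (Real.tendsto_pow_mul_exp_neg_atTop_nhds_zero 1).comp hbs
  have h2 : Tendsto (fun s : ℝ => Real.exp (-(b * s))) atTop (𝓝 0) :=
    (Real.tendsto_exp_neg_atTop_nhds_zero).comp hbs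
  have h3 := (h1.const_mul (-(1 / b ^ 2))).add (h2.const_mul (-(1 / b ^ 2)))
  rw [show -(1 / b ^ 2) * 0 + -(1 / b ^ 2) * 0 = 0 by ring] at h3
  apply h3.congr
  intro s
  have hb' : b ≠ 0 := hb.ne'
  rw [show -b * s = -(b * s) by ring]
  field_simp
  ring

lemma term_integral (b : ℝ) (hb : 0 < b) :
    (∫ s in Ioi (0:ℝ), s * Real.exp (-b * s)) = 1 / b ^ 2 := by
  have h := integral_Ioi_of_hasDerivAt_of_nonneg'
    (g := fun s : ℝ => -((s * b + 1) / b ^ 2) * Real.exp (-b * s))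
    (g' := fun s : ℝ => s * Real.exp (-b * s))
    (fun x _ => term_hasDeriv b hb x)
    (fun x hx => mul_nonneg (le_of_lt hx) (Real.exp_pos _).le)
    (term_tendsto b hb)
  rw [h]
  norm_num

lemma term_integrableOn (b : ℝ) (hb : 0 < b) :
    IntegrableOn (fun s : ℝ => s * Real.exp (-b * s)) (Ioi (0:ℝ)) :=
  integrableOn_Ioi_deriv_of_nonneg'
    (fun x _ => term_hasDeriv b hb x)
    (fun x hx => mul_nonneg (le_of_lt hx) (Real.exp_pos _).le)
    (term_tendsto b hb)

lemma geom_series (s : ℝ) (hs : 0 < s) :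
    HasSum (fun n : ℕ => s * Real.exp (-((n : ℝ) + 1) * s))
      (s * Real.exp (-s) / (1 - Real.exp (-s))) := by
  have h0 : Real.exp (-s) < 1 := Real.exp_lt_one_iff.mpr (by linarith)
  have h1 := (hasSum_geometric_of_lt_one (Real.exp_pos (-s)).le h0).mul_left
    (s * Real.exp (-s))
  have h2 : (fun n : ℕ => s * Real.exp (-s) * Real.exp (-s) ^ n)
      = fun n : ℕ => s * Real.exp (-((n : ℝ) + 1) * s) := by
    funext n
    rw [← Real.exp_nat_mul, mul_assoc, ← Real.exp_add]
    congr 1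
    ring
  rw [h2] at h1
  rw [div_eq_mul_inv]
  exact h1

lemma integral_Ioi_value :
    (∫ s in Ioi (0:ℝ), s * Real.exp (-s) / (1 - Real.exp (-s))) = Real.pi ^ 2 / 6 := by
  have hmeas : MeasurableSet (Ioi (0:ℝ)) := measurableSet_Ioi
  have hcong : (∫ s in Ioi (0:ℝ), s * Real.exp (-s) / (1 - Real.exp (-s)))
      = ∫ s in Ioi (0:ℝ), ∑' n : ℕ, s * Real.exp (-((n : ℝ) + 1) * s) := by
    apply setIntegral_congr_fun hmeas
    intro s hs
    exact ((geom_series s hs).tsum_eq).symm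
  have hb : ∀ n : ℕ, (0:ℝ) < (n : ℝ) + 1 := fun n => by positivity
  have hcont : ∀ n : ℕ, Continuous (fun s : ℝ => s * Real.exp (-((n : ℝ) + 1) * s)) := by
    intro n; fun_prop
  have hint : ∀ n : ℕ, (∫ s in Ioi (0:ℝ), s * Real.exp (-((n : ℝ) + 1) * s))
      = 1 / ((n : ℝ) + 1) ^ 2 := fun n => term_integral _ (hb n)
  have hinton : ∀ n : ℕ, IntegrableOn (fun s : ℝ => s * Real.exp (-((n : ℝ) + 1) * s))
      (Ioi (0:ℝ)) := fun n => term_integrableOn _ (hb n)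
  have hsummable : Summable (fun n : ℕ => 1 / ((n : ℝ) + 1) ^ 2) := basel'.summable
  have hnorm : ∀ n : ℕ, (∫ s in Ioi (0:ℝ), ‖s * Real.exp (-((n : ℝ) + 1) * s)‖)
      = 1 / ((n : ℝ) + 1) ^ 2 := by
    intro n
    rw [← hint n]
    apply setIntegral_congr_fun hmeas
    intro s hs
    simp only [Real.norm_eq_abs]
    rw [abs_of_nonneg (mul_nonneg (le_of_lt hs) (Real.exp_pos _).le)]
  have hlint : ∀ n : ℕ, (∫⁻ s in Ioi (0:ℝ), ‖s * Real.exp (-((n : ℝ) + 1) * s)‖₊)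
      = ENNReal.ofReal (1 / ((n : ℝ) + 1) ^ 2) := by
    intro n
    simp only [← enorm_eq_nnnorm]
    rw [← ofReal_integral_norm_eq_lintegral_enorm (hinton n), hnorm n]
  have hf' : (∑' n : ℕ, ∫⁻ s in Ioi (0:ℝ), ‖s * Real.exp (-((n : ℝ) + 1) * s)‖₊) ≠ ⊤ := by
    simp_rw [hlint]
    rw [← ENNReal.ofReal_tsum_of_nonneg (fun n => by positivity) hsummable]
    exact ENNReal.ofReal_ne_top
  have hswap := integral_tsum
    (fun n : ℕ => ((hcont n).aestronglyMeasurable : AEStronglyMeasurable _ _)) hf'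
  rw [hcong, hswap]
  simp_rw [hint]
  exact basel'.tsum_eq

lemma sg_strictAnti : StrictAnti fl := by
  intro a b hab
  unfold fl
  apply Real.log_lt_log (one_add_exp_pos (-b))
  have := Real.exp_lt_exp.mpr (neg_lt_neg hab)
  linarith

lemma hasDerivAt_fl (t : ℝ) : HasDerivAt fl (sg t - 1) t := by
  have h : HasDerivAt (fun t : ℝ => 1 + Real.exp (-t)) (-Real.exp (-t)) t := by
    have h2 := (Real.hasDerivAt_exp (-t)).comp t ((hasDerivAt_id t).neg)
    simpa using h2.const_add 1
  have h3 := h.log (one_add_exp_ne (-t))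
  convert h3 using 1
  · rfl
  unfold sg
  have h4 := one_add_exp_ne (-t)
  field_simp
  ring

lemma fl_image : fl '' univ = Ioi (0:ℝ) := by
  rw [image_univ]
  ext s
  constructor
  · rintro ⟨t, rfl⟩
    exact fl_pos t
  · intro hs
    rw [mem_Ioi] at hs
    have h1 : (1:ℝ) < Real.exp s := by
      rw [show (1:ℝ) = Real.exp 0 by simp]
      exact Real.exp_lt_exp.mpr hs
    refine ⟨-Real.log (Real.exp s - 1), ?_⟩
    unfold fl
    rw [neg_neg, Real.exp_log (by linarith)]
    rw [show 1 + (Real.exp s - 1) = Real.exp s by ring, Real.log_exp]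

lemma Jinf : (∫ t : ℝ, sg t * fl t) = Real.pi ^ 2 / 6 := by
  have key := integral_image_eq_integral_abs_deriv_smul (MeasurableSet.univ)
    (fun t _ => (hasDerivAt_fl t).hasDerivWithinAt)
    (sg_strictAnti.injective.injOn)
    (fun s : ℝ => s * Real.exp (-s) / (1 - Real.exp (-s)))
  rw [fl_image] at key
  rw [integral_Ioi_value] at key
  rw [Measure.restrict_univ] at key
  rw [key]
  apply integral_congr_ae
  apply ae_of_all
  intro t
  show sg t * fl t = |sg t - 1| • (fl t * Real.exp (-fl t) / (1 - Real.exp (-fl t)))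
  have h1 : |sg t - 1| = 1 - sg t := by
    rw [abs_of_neg (by linarith [sg_lt_one t])]; ring
  rw [h1, smul_eq_mul, exp_neg_fl]
  have h2 : (1:ℝ) - sg t ≠ 0 := by linarith [sg_lt_one t]
  field_simp

/-! ### Quantitative bounds -/

/-- The constant `K`. -/
def Kc : ℝ := ∫ t : ℝ, Real.exp (t / 2) * fl t

lemma Kc_nonneg : 0 ≤ Kc :=
  integral_nonneg fun t => mul_nonneg (Real.exp_pos _).le (fl_nonneg t)

lemma I2_close {d : ℝ} (hd : 0 < d) :
    |(∫ t : ℝ, phi d t * fl t) - Real.pi ^ 2 / 6| ≤ Kc * Real.exp (-d / 2) := by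
  have hsplit : (fun t : ℝ => phi d t * fl t)
      = fun t : ℝ => sg t * fl t - sg (t - d) * fl t := by
    funext t; unfold phi; ring
  have hIsub : (∫ t : ℝ, phi d t * fl t)
      = (∫ t : ℝ, sg t * fl t) - ∫ t : ℝ, sg (t - d) * fl t := by
    rw [hsplit, integral_sub intg_sg_fl (intg_sg_shift_fl hd.le)]
  rw [hIsub, Jinf]
  rw [show Real.pi ^ 2 / 6 - (∫ t : ℝ, sg (t - d) * fl t) - Real.pi ^ 2 / 6
      = -(∫ t : ℝ, sg (t - d) * fl t) by ring, abs_neg]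
  have hnn : 0 ≤ ∫ t : ℝ, sg (t - d) * fl t :=
    integral_nonneg fun t => mul_nonneg (sg_pos _).le (fl_nonneg t)
  rw [abs_of_nonneg hnn]
  have hpoint : ∀ t : ℝ, sg (t - d) * fl t
      ≤ Real.exp (-d / 2) * (Real.exp (t / 2) * fl t) := by
    intro t
    have h1 : sg (t - d) ≤ Real.exp ((t - d) / 2) := sg_le_exp_half (t - d)
    have h2 : Real.exp ((t - d) / 2) = Real.exp (-d / 2) * Real.exp (t / 2) := by
      rw [← Real.exp_add]; ring_nf
    calc sg (t - d) * fl t ≤ Real.exp ((t - d) / 2) * fl t :=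
          mul_le_mul_of_nonneg_right h1 (fl_nonneg t)
      _ = Real.exp (-d / 2) * (Real.exp (t / 2) * fl t) := by rw [h2]; ring
  calc (∫ t : ℝ, sg (t - d) * fl t)
      ≤ ∫ t : ℝ, Real.exp (-d / 2) * (Real.exp (t / 2) * fl t) :=
        integral_mono (intg_sg_shift_fl hd.le) (intg_exp_fl.const_mul _) hpoint
    _ = Real.exp (-d / 2) * Kc := by rw [integral_const_mul]; rfl
    _ = Kc * Real.exp (-d / 2) := by ring

lemma entropy_formula {d : ℝ} (hd : 0 < d) :
    (-∫ x : ℝ, rho d x * Real.log (rho d x))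
      = -Real.log (1 - Real.exp (-d)) + 2 * (∫ t : ℝ, phi d t * fl t) / d := by
  have hG : (fun x : ℝ => rho d x * Real.log (rho d x))
      = fun x : ℝ => (fun t => phi d t * Real.log (phi d t)) (d * x) := by
    funext x; rw [rho_eq]
  rw [hG, Measure.integral_comp_mul_left (fun t => phi d t * Real.log (phi d t)) d]
  have hGd : (fun t : ℝ => phi d t * Real.log (phi d t))
      = fun t : ℝ => Real.log (1 - Real.exp (-d)) * phi d t - phi d t * fl t
          - phi d t * fl (d - t) := by
    funext t
    rw [log_phi hd t]
    ring
  rw [hGd]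
  have hB : Integrable (fun t : ℝ => Real.log (1 - Real.exp (-d)) * phi d t) :=
    (intg_phi hd.le).const_mul _
  have hA : Integrable
      (fun t : ℝ => Real.log (1 - Real.exp (-d)) * phi d t - phi d t * fl t) :=
    hB.sub (intg_phi_fl hd.le)
  rw [integral_sub hA (intg_phi_fl' hd.le),
    integral_sub hB (intg_phi_fl hd.le),
    integral_const_mul, integral_phi hd, integral_phi_fl_symm d]
  rw [abs_of_pos (inv_pos.mpr hd), smul_eq_mul]
  field_simp
  ring

/-! ### The exponential decay dominates any polynomial -/

lemma exp_half_bound {d : ℝ} (hd : 1 ≤ d) : Real.exp (-d / 2) ≤ 216 / d ^ 2 := by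
  have hd0 : (0:ℝ) < d := by linarith
  have h1 : d / 6 ≤ Real.exp (d / 6) := by
    have := Real.add_one_le_exp (d / 6); linarith
  have h2 : (d / 6) ^ 3 ≤ Real.exp (d / 6) ^ 3 := by
    apply pow_le_pow_left₀ (by positivity) h1
  have h3 : Real.exp (d / 6) ^ 3 = Real.exp (d / 2) := by
    rw [← Real.exp_nat_mul]
    congr 1
    push_cast
    ring
  rw [h3] at h2
  have h4 : Real.exp (-d / 2) = (Real.exp (d / 2))⁻¹ := by
    rw [← Real.exp_neg]; ring_nf
  rw [h4]
  have h5 : d ^ 3 / 216 ≤ Real.exp (d / 2) := by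
    calc d ^ 3 / 216 = (d / 6) ^ 3 := by ring
      _ ≤ Real.exp (d / 2) := h2
  have h6 : (0:ℝ) < d ^ 3 / 216 := by positivity
  have h7 : (Real.exp (d / 2))⁻¹ ≤ (d ^ 3 / 216)⁻¹ := by
    apply inv_anti₀ h6 h5
  calc (Real.exp (d / 2))⁻¹ ≤ (d ^ 3 / 216)⁻¹ := h7
    _ = 216 / d ^ 3 := by rw [inv_div]
    _ ≤ 216 / d ^ 2 := by
        apply div_le_div_of_nonneg_left (by norm_num) (by positivity)
        calc d ^ 2 = d ^ 2 * 1 := by ring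
          _ ≤ d ^ 2 * d := by nlinarith
          _ = d ^ 3 := by ring

lemma log_one_sub_exp_bound {d : ℝ} (hd : 1 ≤ d) :
    |Real.log (1 - Real.exp (-d))| ≤ 2 * Real.exp (-d) := by
  set q := Real.exp (-d) with hq
  have hq0 : 0 < q := Real.exp_pos _
  have hqhalf : q ≤ 1 / 2 := by
    have h1 : Real.exp (-d) ≤ Real.exp (-1) := Real.exp_le_exp.mpr (by linarith)
    have h2 : Real.exp (-1) * Real.exp 1 = 1 := by rw [← Real.exp_add]; simp
    have h3 : (2:ℝ) ≤ Real.exp 1 := by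
      have := Real.add_one_le_exp 1; linarith
    nlinarith [Real.exp_pos (1:ℝ)]
  have hpos : 0 < 1 - q := by linarith
  have hle : Real.log (1 - q) ≤ 0 := Real.log_nonpos (by linarith) (by linarith)
  have hlow : -Real.log (1 - q) ≤ 2 * q := by
    have h1 : Real.log ((1 - q)⁻¹) ≤ (1 - q)⁻¹ - 1 :=
      Real.log_le_sub_one_of_pos (by positivity)
    rw [Real.log_inv] at h1
    have h2 : (1 - q)⁻¹ ≤ 1 + 2 * q := by
      rw [inv_le_iff_one_le_mul₀ hpos]
      nlinarith
    linarith
  rw [abs_of_nonpos hle]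
  linarith

end EntropyAux

open EntropyAux in
/-- Entropy asymptotics of the logistic profile:
`H(ρ_d) = π²/(3d) + O(d⁻²)`. -/
theorem stmt_7 :
    ∃ C : ℝ, 0 < C ∧ ∃ d₀ : ℝ, 0 < d₀ ∧
      ∀ d : ℝ, d₀ ≤ d →
        |(-∫ x : ℝ, rho d x * Real.log (rho d x)) - Real.pi ^ 2 / (3 * d)| ≤ C / d ^ 2 := by
  refine ⟨432 * Kc + 432, by nlinarith [Kc_nonneg], 1, one_pos, ?_⟩
  intro d hd
  have hd0 : (0:ℝ) < d := by linarith
  rw [entropy_formula hd0]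
  have hkey : -Real.log (1 - Real.exp (-d)) + 2 * (∫ t : ℝ, phi d t * fl t) / d
      - Real.pi ^ 2 / (3 * d)
      = -Real.log (1 - Real.exp (-d))
        + (2 / d) * ((∫ t : ℝ, phi d t * fl t) - Real.pi ^ 2 / 6) := by
    field_simp
    ring
  rw [hkey]
  have h1 := log_one_sub_exp_bound hd
  have h2 := I2_close hd0
  have h3 : |(-Real.log (1 - Real.exp (-d)))
      + (2 / d) * ((∫ t : ℝ, phi d t * fl t) - Real.pi ^ 2 / 6)|
      ≤ |Real.log (1 - Real.exp (-d))|
        + (2 / d) * |(∫ t : ℝ, phi d t * fl t) - Real.pi ^ 2 / 6| := by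
    calc |(-Real.log (1 - Real.exp (-d)))
        + (2 / d) * ((∫ t : ℝ, phi d t * fl t) - Real.pi ^ 2 / 6)|
        ≤ |(-Real.log (1 - Real.exp (-d)))|
          + |(2 / d) * ((∫ t : ℝ, phi d t * fl t) - Real.pi ^ 2 / 6)| := abs_add_le _ _
      _ = |Real.log (1 - Real.exp (-d))|
          + (2 / d) * |(∫ t : ℝ, phi d t * fl t) - Real.pi ^ 2 / 6| := by
          rw [abs_neg, abs_mul, abs_of_pos (by positivity : (0:ℝ) < 2 / d)]
  have h4 : (2 / d) * |(∫ t : ℝ, phi d t * fl t) - Real.pi ^ 2 / 6|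
      ≤ 2 * (Kc * Real.exp (-d / 2)) := by
    have h5 : (2 / d) ≤ 2 := by
      rw [div_le_iff₀ hd0]; nlinarith
    have h6 : (0:ℝ) ≤ |(∫ t : ℝ, phi d t * fl t) - Real.pi ^ 2 / 6| := abs_nonneg _
    calc (2 / d) * |(∫ t : ℝ, phi d t * fl t) - Real.pi ^ 2 / 6|
        ≤ 2 * |(∫ t : ℝ, phi d t * fl t) - Real.pi ^ 2 / 6| :=
          mul_le_mul_of_nonneg_right h5 h6
      _ ≤ 2 * (Kc * Real.exp (-d / 2)) := by nlinarith
  have hexp : Real.exp (-d) ≤ Real.exp (-d / 2) := Real.exp_le_exp.mpr (by linarith)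
  have hbound := exp_half_bound hd
  have hKc := Kc_nonneg
  calc |(-Real.log (1 - Real.exp (-d)))
      + (2 / d) * ((∫ t : ℝ, phi d t * fl t) - Real.pi ^ 2 / 6)|
      ≤ |Real.log (1 - Real.exp (-d))|
        + (2 / d) * |(∫ t : ℝ, phi d t * fl t) - Real.pi ^ 2 / 6| := h3
    _ ≤ 2 * Real.exp (-d) + 2 * (Kc * Real.exp (-d / 2)) := by linarith
    _ ≤ (2 + 2 * Kc) * Real.exp (-d / 2) := by nlinarith [Real.exp_pos (-d/2)]
    _ ≤ (2 + 2 * Kc) * (216 / d ^ 2) := by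
        apply mul_le_mul_of_nonneg_left hbound (by linarith)
    _ = (432 * Kc + 432) / d ^ 2 := by ring

end
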